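/- Let $P$ be an extra special $p$-group with non-central subgroup $Q$ and let $C = C_P(Q)$. Then the number of orbits of $C$ acting by left multiplication on the $Q$-orbit sums $\{\kappa_x : x \in P \setminus C\}$ equals $|P : C| - 1$, and each orbit has size $|C : Z(P)|$. -/

import Mathlib

set_option synthInstance.maxHeartbeats 1000000
set_option maxHeartbeats 1000000

open MonoidAlgebra Finset
open scoped Classical

/-- The centralizer algebra `kP^Q`: the subalgebra of the group algebra `kP`
fixed by the conjugation action of the subgroup `Q`. -/
noncomputable def centAlg (k : Type*) [Field k] {P : Type*} [Group P] (Q : Subgroup P) :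
    Subalgebra k (MonoidAlgebra k P) :=
  ⨅ q ∈ Q, AlgHom.equalizer
    (MonoidAlgebra.domCongr k k (MulAut.conj q : P ≃* P)).toAlgHom (AlgHom.id k _)

/-- The augmentation map `kP → k`. -/
noncomputable def aug (k : Type*) [Field k] (P : Type*) [Group P] :
    MonoidAlgebra k P →ₐ[k] k := MonoidAlgebra.lift (R := k) (M := P) (A := k) 1

/-- The Jacobson radical of a `k`-algebra, as a `k`-submodule. -/
noncomputable def jacRad (k : Type*) [Field k] (A : Type*) [Ring A] [Algebra k A] :
    Submodule k A :=
  Submodule.restrictScalars k ((⊥ : Ideal A).jacobson)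

/-- The Loewy length: the least `d` with `J^d = 0`. -/
noncomputable def llen (k : Type*) [Field k] (A : Type*) [Ring A] [Algebra k A] : ℕ :=
  sInf {d | jacRad k A ^ d = ⊥}

/-- The `Q`-conjugation orbit sum `κ_x ∈ kP`. -/
noncomputable def kappa {k : Type*} [Field k] {P : Type*} [Group P] [Fintype P]
    (Q : Subgroup P) (x : P) : MonoidAlgebra k P :=
  ∑ y ∈ Finset.univ.filter (fun y => ∃ q ∈ Q, q * x * q⁻¹ = y), MonoidAlgebra.single y 1

/-- The span `I` of the orbit sums `κ_x`, `x ∉ C_P(Q)`. -/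
noncomputable def idealI (k : Type*) [Field k] {P : Type*} [Group P] [Fintype P]
    (Q : Subgroup P) : Submodule k (MonoidAlgebra k P) :=
  Submodule.span k
    {f | ∃ x ∉ Subgroup.centralizer (Q : Set P), f = kappa Q x}

/-- The span of `C_P(Q)` inside `kP`, i.e. the subalgebra `kC_P(Q)`. -/
noncomputable def subC (k : Type*) [Field k] {P : Type*} [Group P]
    (Q : Subgroup P) : Submodule k (MonoidAlgebra k P) :=
  Submodule.span k
    {f | ∃ c ∈ Subgroup.centralizer (Q : Set P), f = MonoidAlgebra.single c (1 : k)}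

/-- The radical `J' = J(kC_P(Q))`, i.e. the augmentation-trivial part of `kC_P(Q)`. -/
noncomputable def jacC (k : Type*) [Field k] {P : Type*} [Group P]
    (Q : Subgroup P) : Submodule k (MonoidAlgebra k P) :=
  subC k Q ⊓ LinearMap.ker (aug k P).toLinearMap


section helpers

variable {k : Type*} [Field k] {P : Type*} [Group P] [Fintype P]

lemma sum_single_inj {A B : Finset P}
    (h : ∑ y ∈ A, MonoidAlgebra.single y (1:k) = ∑ y ∈ B, MonoidAlgebra.single y (1:k)) :
    A = B := by
  ext t
  have h' : (∑ y ∈ A, Finsupp.single y (1:k)) = ∑ y ∈ B, Finsupp.single y (1:k) := by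
    have := congrArg MonoidAlgebra.coeff h
    rwa [MonoidAlgebra.coeff_sum, MonoidAlgebra.coeff_sum] at this
  have h2 := Finsupp.ext_iff.mp h' t
  simp only [Finsupp.finset_sum_apply, Finsupp.single_apply, Finset.sum_ite_eq'] at h2
  by_cases hA : t ∈ A <;> by_cases hB : t ∈ B
  · simp [hA, hB]
  · rw [if_pos hA, if_neg hB] at h2; exact absurd h2 one_ne_zero
  · rw [if_neg hA, if_pos hB] at h2; exact absurd h2.symm one_ne_zero
  · simp [hA, hB]

lemma conj_central {x w : P} (a b : P) (hw : ∀ g : P, g * w = w * g) :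
    a * (x * w) * b = a * x * b * w := by
  calc a * (x * w) * b = a * x * (w * b) := by group
    _ = a * x * (b * w) := by rw [hw b]
    _ = a * x * b * w := by group

variable {p : ℕ} [Fact p.Prime]
variable (hZC : Subgroup.center P = commutator P)
variable (hcard : Nat.card (Subgroup.center P) = p)
variable {Q : Subgroup P}

open scoped commutatorElement in
lemma comm_mem_center (hZC : Subgroup.center P = commutator P) (a b : P) :
    a⁻¹ * b * a * b⁻¹ ∈ Subgroup.center P := by
  rw [hZC, commutator_def]
  have : a⁻¹ * b * a * b⁻¹ = ⁅a⁻¹, b⁆ := by group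
  rw [this]
  exact Subgroup.commutator_mem_commutator (Subgroup.mem_top _) (Subgroup.mem_top _)

lemma orbit_eq (hZC : Subgroup.center P = commutator P)
    (hcard : Nat.card (Subgroup.center P) = p)
    {x : P} (hx : x ∉ Subgroup.centralizer (Q : Set P)) (y : P) :
    (∃ q ∈ Q, q * x * q⁻¹ = y) ↔ ∃ z ∈ Subgroup.center P, y = x * z := by
  constructor
  · rintro ⟨q, hq, rfl⟩
    exact ⟨x⁻¹ * q * x * q⁻¹, comm_mem_center hZC x q, by group⟩
  · rintro ⟨z, hz, rfl⟩
    rw [Subgroup.mem_centralizer_iff] at hx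
    push_neg at hx
    obtain ⟨q₀, hq₀, hne⟩ := hx
    set z₀ : P := x⁻¹ * q₀ * x * q₀⁻¹ with hz₀def
    have hz₀Z : z₀ ∈ Subgroup.center P := comm_mem_center hZC x q₀
    have hz₀1 : z₀ ≠ 1 := by
      intro h
      apply hne
      have : x⁻¹ * q₀ * x * q₀⁻¹ = 1 := h
      group at this ⊢
      -- from x⁻¹ q₀ x q₀⁻¹ = 1 conclude q₀ x = x q₀
      have := congrArg (fun w => x * w * q₀) this
      simpa [mul_assoc] using this
    have hz₀p : orderOf z₀ = p := by
      have hd : orderOf z₀ ∣ p := by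
        rw [← hcard]; exact Subgroup.orderOf_dvd_natCard _ hz₀Z
      rcases (Nat.Prime.eq_one_or_self_of_dvd (Fact.out) _ hd) with h | h
      · exact absurd (orderOf_eq_one_iff.mp h) hz₀1
      · exact h
    have hzpow : Subgroup.zpowers z₀ = Subgroup.center P := by
      apply Subgroup.eq_of_le_of_card_ge (Subgroup.zpowers_le.mpr hz₀Z)
      rw [hcard, Nat.card_zpowers, hz₀p]
    have hcen : ∀ (m : ℤ) (g : P), g * z₀ ^ m = z₀ ^ m * g := fun m g =>
      (Subgroup.mem_center_iff.mp (Subgroup.zpow_mem _ hz₀Z m) g)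
    have h1 : q₀ * x * q₀⁻¹ = x * z₀ := by rw [hz₀def]; group
    have key : ∀ n : ℤ, q₀ ^ n * x * (q₀ ^ n)⁻¹ = x * z₀ ^ n := by
      intro n
      induction n using Int.induction_on with
      | zero => simp
      | succ i ih =>
        have hq : q₀ ^ ((i : ℤ) + 1) = q₀ * q₀ ^ (i : ℤ) := by
          rw [add_comm, zpow_add, zpow_one]
        have hz' : z₀ ^ ((i:ℤ) + 1) = z₀ * z₀ ^ (i:ℤ) := by
          rw [add_comm, zpow_add, zpow_one]
        rw [hq, hz', mul_inv_rev]
        calc q₀ * q₀ ^ (i:ℤ) * x * ((q₀ ^ (i:ℤ))⁻¹ * q₀⁻¹)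
            = q₀ * (q₀ ^ (i:ℤ) * x * (q₀ ^ (i:ℤ))⁻¹) * q₀⁻¹ := by group
          _ = q₀ * (x * z₀ ^ (i:ℤ)) * q₀⁻¹ := by rw [ih]
          _ = q₀ * x * q₀⁻¹ * z₀ ^ (i:ℤ) := conj_central _ _ (hcen _)
          _ = x * z₀ * z₀ ^ (i:ℤ) := by rw [h1]
          _ = x * (z₀ * z₀ ^ (i:ℤ)) := by rw [mul_assoc]
      | pred i ih =>
        have h1' : q₀⁻¹ * x * q₀ = x * z₀⁻¹ := by
          have h2 : z₀⁻¹ * q₀ = q₀ * z₀⁻¹ :=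
            (Subgroup.mem_center_iff.mp (Subgroup.inv_mem _ hz₀Z) q₀).symm
          calc q₀⁻¹ * x * q₀ = q₀⁻¹ * (q₀ * x * q₀⁻¹) * z₀⁻¹ * q₀ := by rw [h1]; group
            _ = x * (q₀⁻¹ * (z₀⁻¹ * q₀)) := by group
            _ = x * (q₀⁻¹ * (q₀ * z₀⁻¹)) := by rw [h2]
            _ = x * z₀⁻¹ := by group
        have hq : q₀ ^ (-(i:ℤ) - 1) = q₀⁻¹ * q₀ ^ (-(i:ℤ)) := by
          have : (-(i:ℤ) - 1) = (-1) + (-(i:ℤ)) := by ring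
          rw [this, zpow_add, zpow_neg_one]
        have hz' : z₀ ^ (-(i:ℤ) - 1) = z₀⁻¹ * z₀ ^ (-(i:ℤ)) := by
          have : (-(i:ℤ) - 1) = (-1) + (-(i:ℤ)) := by ring
          rw [this, zpow_add, zpow_neg_one]
        rw [hq, hz', mul_inv_rev, inv_inv]
        calc q₀⁻¹ * q₀ ^ (-(i:ℤ)) * x * ((q₀ ^ (-(i:ℤ)))⁻¹ * q₀)
            = q₀⁻¹ * (q₀ ^ (-(i:ℤ)) * x * (q₀ ^ (-(i:ℤ)))⁻¹) * q₀ := by group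
          _ = q₀⁻¹ * (x * z₀ ^ (-(i:ℤ))) * q₀ := by rw [ih]
          _ = q₀⁻¹ * x * q₀ * z₀ ^ (-(i:ℤ)) := conj_central _ _ (hcen _)
          _ = x * z₀⁻¹ * z₀ ^ (-(i:ℤ)) := by rw [h1']
          _ = x * (z₀⁻¹ * z₀ ^ (-(i:ℤ))) := by rw [mul_assoc]
    rw [← hzpow] at hz
    obtain ⟨n, rfl⟩ := hz
    exact ⟨q₀ ^ n, Subgroup.zpow_mem Q hq₀ n, key n⟩

lemma kappa_coset (hZC : Subgroup.center P = commutator P)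
    (hcard : Nat.card (Subgroup.center P) = p)
    {x : P} (hx : x ∉ Subgroup.centralizer (Q : Set P)) :
    (kappa Q x : MonoidAlgebra k P) =
      ∑ y ∈ Finset.univ.filter (fun y => ∃ z ∈ Subgroup.center P, y = x * z),
        MonoidAlgebra.single y 1 := by
  unfold kappa
  congr 1
  apply Finset.filter_congr
  intro y _
  simpa using orbit_eq hZC hcard hx y

lemma coset_filter_eq {x x' : P} (h : x⁻¹ * x' ∈ Subgroup.center P) :
    Finset.univ.filter (fun y => ∃ z ∈ Subgroup.center P, y = x * z) =
    Finset.univ.filter (fun y => ∃ z ∈ Subgroup.center P, y = x' * z) := by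
  ext y
  simp only [Finset.mem_filter, Finset.mem_univ, true_and]
  constructor
  · rintro ⟨z, hz, rfl⟩
    refine ⟨(x⁻¹ * x')⁻¹ * z, Subgroup.mul_mem _ (Subgroup.inv_mem _ h) hz, ?_⟩
    group
  · rintro ⟨z, hz, rfl⟩
    refine ⟨(x⁻¹ * x') * z, Subgroup.mul_mem _ h hz, ?_⟩
    group

lemma kappa_eq_iff (hZC : Subgroup.center P = commutator P)
    (hcard : Nat.card (Subgroup.center P) = p)
    {x x' : P} (hx : x ∉ Subgroup.centralizer (Q : Set P))
    (hx' : x' ∉ Subgroup.centralizer (Q : Set P)) :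
    (kappa Q x : MonoidAlgebra k P) = kappa Q x' ↔ x⁻¹ * x' ∈ Subgroup.center P := by
  rw [kappa_coset hZC hcard hx, kappa_coset hZC hcard hx']
  constructor
  · intro h
    have hAB := sum_single_inj h
    have hx'B : x' ∈ Finset.univ.filter
        (fun y => ∃ z ∈ Subgroup.center P, y = x' * z) := by
      simp only [Finset.mem_filter, Finset.mem_univ, true_and]
      exact ⟨1, Subgroup.one_mem _, (mul_one x').symm⟩
    rw [← hAB] at hx'B
    simp only [Finset.mem_filter, Finset.mem_univ, true_and] at hx'B
    obtain ⟨z, hz, hzz⟩ := hx'B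
    have : x⁻¹ * x' = z := by rw [hzz]; group
    rwa [this]
  · intro h
    rw [coset_filter_eq h]

lemma single_mul_kappa (hZC : Subgroup.center P = commutator P)
    (hcard : Nat.card (Subgroup.center P) = p)
    {c x : P} (hc : c ∈ Subgroup.centralizer (Q : Set P))
    (hx : x ∉ Subgroup.centralizer (Q : Set P)) :
    MonoidAlgebra.single c (1:k) * kappa Q x = kappa Q (c * x) := by
  have hcx : c * x ∉ Subgroup.centralizer (Q : Set P) := by
    intro h
    exact hx (by simpa using Subgroup.mul_mem _ (Subgroup.inv_mem _ hc) h)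
  rw [kappa_coset hZC hcard hx, kappa_coset hZC hcard hcx, Finset.mul_sum]
  have himg : Finset.univ.filter (fun y => ∃ z ∈ Subgroup.center P, y = c * x * z) =
      (Finset.univ.filter (fun y => ∃ z ∈ Subgroup.center P, y = x * z)).image
        (fun y => c * y) := by
    ext y
    simp only [Finset.mem_image, Finset.mem_filter, Finset.mem_univ, true_and]
    constructor
    · rintro ⟨z, hz, rfl⟩
      exact ⟨x * z, ⟨z, hz, rfl⟩, by group⟩
    · rintro ⟨a, ⟨z, hz, rfl⟩, rfl⟩
      exact ⟨z, hz, by group⟩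
  rw [himg, Finset.sum_image (by intro a _ b _ h; exact mul_left_cancel h)]
  apply Finset.sum_congr rfl
  intro y _
  rw [MonoidAlgebra.single_mul_single, one_mul]

end helpers


theorem stmt_12 {p : ℕ} [Fact p.Prime] (k : Type*) [Field k] [CharP k p]
    {P : Type*} [Group P] [Fintype P] (hP : IsPGroup p P)
    (hZC : Subgroup.center P = commutator P) (hZF : Subgroup.center P = frattini P)
    (hcard : Nat.card (Subgroup.center P) = p)
    (Q : Subgroup P) (hQ : ¬ Q ≤ Subgroup.center P) :
    ∃ reps : Finset P,
      (∀ r ∈ reps, r ∉ Subgroup.centralizer (Q : Set P)) ∧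
      reps.card = (Subgroup.centralizer (Q : Set P)).index - 1 ∧
      (∀ x ∉ Subgroup.centralizer (Q : Set P), ∃! r, r ∈ reps ∧
        ∃ c ∈ Subgroup.centralizer (Q : Set P),
          MonoidAlgebra.single c (1 : k) * kappa Q r = kappa Q x) ∧
      (∀ r ∈ reps,
        Set.ncard {g : MonoidAlgebra k P | ∃ c ∈ Subgroup.centralizer (Q : Set P),
            g = MonoidAlgebra.single c (1 : k) * kappa Q r} =
          (Subgroup.center P).relIndex (Subgroup.centralizer (Q : Set P))) := by
  classical
  haveI : DecidableEq (P ⧸ Subgroup.centralizer (Q : Set P)) := Classical.decEq _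
  haveI : Finite (P ⧸ Subgroup.centralizer (Q : Set P)) := Quotient.finite _
  haveI := Fintype.ofFinite (P ⧸ Subgroup.centralizer (Q : Set P))
  have hmk1 : ∀ g : P, ((g : P ⧸ Subgroup.centralizer (Q : Set P)) =
      QuotientGroup.mk (1 : P) ↔ g ∈ Subgroup.centralizer (Q : Set P)) := by
    intro g
    rw [QuotientGroup.eq]
    simp
  have hinj0 : Function.Injective
      (fun q : P ⧸ Subgroup.centralizer (Q : Set P) => (Quotient.out q)⁻¹) := by
    intro a b h
    have := congrArg (fun g : P => g⁻¹) h
    simp only [inv_inv] at this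
    rw [← QuotientGroup.out_eq' a, ← QuotientGroup.out_eq' b, this]
  set reps : Finset P :=
    (Finset.univ.filter (fun q : P ⧸ Subgroup.centralizer (Q : Set P) =>
        q ≠ QuotientGroup.mk (1 : P))).map
      ⟨fun q => (Quotient.out q)⁻¹, hinj0⟩ with hrepsdef
  have hreps : ∀ r ∈ reps, r ∉ Subgroup.centralizer (Q : Set P) := by
    intro r hr
    rw [hrepsdef, Finset.mem_map] at hr
    obtain ⟨q, hq, rfl⟩ := hr
    rw [Finset.mem_filter] at hq
    intro hc
    simp only [Function.Embedding.coeFn_mk] at hc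
    rw [Subgroup.inv_mem_iff, ← hmk1, QuotientGroup.out_eq'] at hc
    exact hq.2 hc
  refine ⟨reps, hreps, ?_, ?_, ?_⟩
  · -- cardinality
    rw [hrepsdef, Finset.card_map]
    have h1 : Finset.univ.filter
        (fun q : P ⧸ Subgroup.centralizer (Q : Set P) => q ≠ QuotientGroup.mk (1 : P)) =
        Finset.univ.erase (QuotientGroup.mk (1 : P)) := by
      ext q
      simp [Finset.mem_erase, and_comm]
    rw [h1, Finset.card_erase_of_mem (Finset.mem_univ _), Finset.card_univ]
    have h2 : (Subgroup.centralizer (Q : Set P)).index =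
        Fintype.card (P ⧸ Subgroup.centralizer (Q : Set P)) := by
      rw [Subgroup.index_eq_card, Nat.card_eq_fintype_card]
    rw [h2]
    congr 1
  · -- existence and uniqueness
    intro x hx
    have hq1 : ((x⁻¹ : P) : P ⧸ Subgroup.centralizer (Q : Set P)) ≠
        QuotientGroup.mk (1 : P) := by
      intro h
      rw [hmk1, Subgroup.inv_mem_iff] at h
      exact hx h
    set r : P := (Quotient.out ((x⁻¹ : P) : P ⧸ Subgroup.centralizer (Q : Set P)))⁻¹
      with hrdef
    have hrmem : r ∈ reps := by
      rw [hrepsdef, Finset.mem_map]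
      exact ⟨_, Finset.mem_filter.mpr ⟨Finset.mem_univ _, hq1⟩, rfl⟩
    have hrC : r ∉ Subgroup.centralizer (Q : Set P) := hreps r hrmem
    have hxr : x * r⁻¹ ∈ Subgroup.centralizer (Q : Set P) := by
      have h1 : ((r⁻¹ : P) : P ⧸ Subgroup.centralizer (Q : Set P)) =
          ((x⁻¹ : P) : P ⧸ Subgroup.centralizer (Q : Set P)) := by
        rw [hrdef, inv_inv, QuotientGroup.out_eq']
      rw [QuotientGroup.eq, inv_inv] at h1
      have := Subgroup.inv_mem _ h1
      simpa [mul_inv_rev] using this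
    refine ⟨r, ⟨hrmem, x * r⁻¹, hxr, ?_⟩, ?_⟩
    · rw [single_mul_kappa hZC hcard hxr hrC, inv_mul_cancel_right]
    · rintro r' ⟨hr'mem, c', hc', hEq⟩
      have hr'C : r' ∉ Subgroup.centralizer (Q : Set P) := hreps r' hr'mem
      rw [single_mul_kappa hZC hcard hc' hr'C] at hEq
      have hc'r' : c' * r' ∉ Subgroup.centralizer (Q : Set P) := by
        intro h
        exact hr'C (by simpa using Subgroup.mul_mem _ (Subgroup.inv_mem _ hc') h)
      have hZmem : (c' * r')⁻¹ * x ∈ Subgroup.center P :=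
        (kappa_eq_iff hZC hcard hc'r' hx).mp hEq
      have hwC : (c' * r')⁻¹ * x ∈ Subgroup.centralizer (Q : Set P) :=
        Subgroup.center_le_centralizer _ hZmem
      have hcomm := Subgroup.mem_center_iff.mp hZmem
      have h4 : r' * ((c' * r')⁻¹ * x)⁻¹ = ((c' * r')⁻¹ * x)⁻¹ * r' := by
        have h3 := hcomm r'
        calc r' * ((c' * r')⁻¹ * x)⁻¹
            = ((c' * r')⁻¹ * x)⁻¹ * (((c' * r')⁻¹ * x) * r') * ((c' * r')⁻¹ * x)⁻¹ := by
              group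
          _ = ((c' * r')⁻¹ * x)⁻¹ * (r' * ((c' * r')⁻¹ * x)) * ((c' * r')⁻¹ * x)⁻¹ := by
              rw [← h3]
          _ = ((c' * r')⁻¹ * x)⁻¹ * r' := by group
      have hrx : r' * x⁻¹ ∈ Subgroup.centralizer (Q : Set P) := by
        have h5 : r' * x⁻¹ = ((c' * r')⁻¹ * x)⁻¹ * c'⁻¹ := by
          calc r' * x⁻¹ = r' * ((c' * r')⁻¹ * x)⁻¹ * r'⁻¹ * c'⁻¹ := by group
            _ = ((c' * r')⁻¹ * x)⁻¹ * r' * r'⁻¹ * c'⁻¹ := by rw [h4]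
            _ = ((c' * r')⁻¹ * x)⁻¹ * c'⁻¹ := by group
        rw [h5]
        exact Subgroup.mul_mem _ (Subgroup.inv_mem _ hwC) (Subgroup.inv_mem _ hc')
      -- conclude r' = r
      rw [hrepsdef, Finset.mem_map] at hr'mem
      obtain ⟨q', hq'f, rfl⟩ := hr'mem
      have h6 : ((Quotient.out q' : P) : P ⧸ Subgroup.centralizer (Q : Set P)) =
          ((x⁻¹ : P) : P ⧸ Subgroup.centralizer (Q : Set P)) := by
        rw [QuotientGroup.eq]
        exact hrx
      rw [QuotientGroup.out_eq'] at h6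
      rw [hrdef, ← h6]
      rfl
  · -- orbit sizes
    intro r hr
    have hrC : r ∉ Subgroup.centralizer (Q : Set P) := hreps r hr
    have hnot : ∀ a : Subgroup.centralizer (Q : Set P),
        (a : P) * r ∉ Subgroup.centralizer (Q : Set P) := by
      intro a h
      exact hrC (by simpa using Subgroup.mul_mem _ (Subgroup.inv_mem _ a.2) h)
    have hiff : ∀ a b : Subgroup.centralizer (Q : Set P),
        (MonoidAlgebra.single ((a : P)) (1:k) * kappa Q r =
          MonoidAlgebra.single ((b : P)) (1:k) * kappa Q r) ↔
        (a : P)⁻¹ * (b : P) ∈ Subgroup.center P := by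
      intro a b
      rw [single_mul_kappa hZC hcard a.2 hrC, single_mul_kappa hZC hcard b.2 hrC,
        kappa_eq_iff hZC hcard (hnot a) (hnot b)]
      constructor
      · intro hZmem
        have hcm' := Subgroup.mem_center_iff.mp hZmem
        have heq : (a : P)⁻¹ * (b : P) =
            r * (((a : P) * r)⁻¹ * ((b : P) * r)) * r⁻¹ := by group
        rw [heq, hcm' r]
        have h7 : (((a : P) * r)⁻¹ * ((b : P) * r)) * r * r⁻¹ =
            ((a : P) * r)⁻¹ * ((b : P) * r) := by group
        rw [h7]
        exact hZmem
      · intro hzz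
        have hcm := Subgroup.mem_center_iff.mp hzz r
        have heq : ((a : P) * r)⁻¹ * ((b : P) * r) = (a : P)⁻¹ * (b : P) := by
          calc ((a : P) * r)⁻¹ * ((b : P) * r)
              = r⁻¹ * (((a : P)⁻¹ * (b : P)) * r) := by group
            _ = r⁻¹ * (r * ((a : P)⁻¹ * (b : P))) := by rw [← hcm]
            _ = (a : P)⁻¹ * (b : P) := by group
        rw [heq]
        exact hzz
    have hrel : ∀ a b : Subgroup.centralizer (Q : Set P),
        @Setoid.r _ (QuotientGroup.leftRel
          ((Subgroup.center P).subgroupOf (Subgroup.centralizer (Q : Set P)))) a b ↔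
        (a : P)⁻¹ * (b : P) ∈ Subgroup.center P := by
      intro a b
      rw [show (@Setoid.r _ (QuotientGroup.leftRel
            ((Subgroup.center P).subgroupOf (Subgroup.centralizer (Q : Set P)))) a b) =
          ((QuotientGroup.leftRel
            ((Subgroup.center P).subgroupOf (Subgroup.centralizer (Q : Set P)))) a b)
          from rfl,
        QuotientGroup.leftRel_apply, Subgroup.mem_subgroupOf]
      simp
    set ψ : (Subgroup.centralizer (Q : Set P)) ⧸
        ((Subgroup.center P).subgroupOf (Subgroup.centralizer (Q : Set P))) →
        MonoidAlgebra k P :=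
      fun q => Quotient.liftOn' q
        (fun c : Subgroup.centralizer (Q : Set P) =>
          MonoidAlgebra.single ((c : P)) (1:k) * kappa Q r)
        (fun a b hab => (hiff a b).mpr ((hrel a b).mp hab)) with hψdef
    have hinj : Function.Injective ψ := by
      intro a b
      induction a using Quotient.inductionOn' with | h a =>
      induction b using Quotient.inductionOn' with | h b =>
      intro hab
      have hab' : MonoidAlgebra.single ((a : P)) (1:k) * kappa Q r =
          MonoidAlgebra.single ((b : P)) (1:k) * kappa Q r := hab
      exact Quotient.sound' ((hrel a b).mpr ((hiff a b).mp hab'))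
    have hrange : {g : MonoidAlgebra k P | ∃ c ∈ Subgroup.centralizer (Q : Set P),
        g = MonoidAlgebra.single c (1 : k) * kappa Q r} = Set.range ψ := by
      ext g
      simp only [Set.mem_setOf_eq, Set.mem_range]
      constructor
      · rintro ⟨c, hc, rfl⟩
        exact ⟨Quotient.mk'' ⟨c, hc⟩, rfl⟩
      · rintro ⟨a, rfl⟩
        induction a using Quotient.inductionOn' with | h a =>
        exact ⟨(a : P), a.2, rfl⟩
    rw [hrange, ← Nat.card_coe_set_eq,
      Nat.card_congr (Equiv.ofInjective ψ hinj).symm]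
    rfl
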